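/- Let X be a regular topological space and Y any topological space. For every x ∈ X, every nonempty closed set E ⊆ X with x ∉ E, and all points y₁, y₂ ∈ Y, there exists a quasi-continuous function f : X → Y such that f(x) = y₁ and f(E) = {y₂}. -/
import Mathlib


open Cardinal

universe u v w

/-- A function between topological spaces is quasi-continuous if for every point `x` and
all open sets `U ∋ x` and `V ∋ f x` there is a nonempty open `G ⊆ U` with `f '' G ⊆ V`. -/
def QuasiContinuous {X Y : Type*} [TopologicalSpace X] [TopologicalSpace Y] (f : X → Y) : Prop :=
  ∀ x : X, ∀ U : Set X, IsOpen U → x ∈ U → ∀ V : Set Y, IsOpen V → f x ∈ V →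
    ∃ G : Set X, IsOpen G ∧ G.Nonempty ∧ G ⊆ U ∧ f '' G ⊆ V

/-- `QP X Y` : the quasi-continuous functions from `X` to `Y`, topologized as a subspace of
the product topology on `X → Y` (topology of pointwise convergence). -/
abbrev QP (X Y : Type*) [TopologicalSpace X] [TopologicalSpace Y] :=
  {f : X → Y // QuasiContinuous f}

/-- `CP X Y` : the continuous functions from `X` to `Y` with the topology of
pointwise convergence. -/
abbrev CP (X Y : Type*) [TopologicalSpace X] [TopologicalSpace Y] :=
  {f : X → Y // Continuous f}

/-- The weight of a topological space: `ℵ₀ +` the least cardinality of a basis. -/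
noncomputable def weight (Z : Type u) [TopologicalSpace Z] : Cardinal.{u} :=
  ℵ₀ + sInf {c | ∃ B : Set (Set Z), TopologicalSpace.IsTopologicalBasis B ∧ #B = c}

/-- A network of a space: a family of (arbitrary) subsets such that every open `U ∋ z`
contains some member of the family containing `z`. -/
def IsNetwork {Z : Type u} [TopologicalSpace Z] (N : Set (Set Z)) : Prop :=
  ∀ z : Z, ∀ U : Set Z, IsOpen U → z ∈ U → ∃ A ∈ N, z ∈ A ∧ A ⊆ U

/-- Network weight: `ℵ₀ +` the least cardinality of a network. -/
noncomputable def netWeight (Z : Type u) [TopologicalSpace Z] : Cardinal.{u} :=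
  ℵ₀ + sInf {c | ∃ N : Set (Set Z), IsNetwork N ∧ #N = c}

/-- Density: `ℵ₀ +` the least cardinality of a dense subset. -/
noncomputable def density (Z : Type u) [TopologicalSpace Z] : Cardinal.{u} :=
  ℵ₀ + sInf {c | ∃ D : Set Z, Dense D ∧ #D = c}

/-- Lindelöf degree: `ℵ₀ +` the least cardinal `η` such that every open cover has a
subcover of cardinality at most `η`. -/
noncomputable def lindelofDegree (X : Type u) [TopologicalSpace X] : Cardinal.{u} :=
  ℵ₀ + sInf {η | ∀ V : Set (Set X), (∀ U ∈ V, IsOpen U) → ⋃₀ V = Set.univ →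
      ∃ W ⊆ V, #W ≤ η ∧ ⋃₀ W = Set.univ}

/-- Tightness: `ℵ₀ +` the least cardinal `η` such that whenever `z ∈ closure A` there is
`B ⊆ A` with `#B ≤ η` and `z ∈ closure B`. -/
noncomputable def tightness (Z : Type u) [TopologicalSpace Z] : Cardinal.{u} :=
  ℵ₀ + sInf {η | ∀ z : Z, ∀ A : Set Z, z ∈ closure A →
      ∃ B ⊆ A, #B ≤ η ∧ z ∈ closure B}

/-- Pseudocharacter of a space: the sup over points `z` of `ℵ₀ +` the least cardinality of a
family of open sets whose intersection is `{z}`. -/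
noncomputable def pseudoChar (Z : Type u) [TopologicalSpace Z] : Cardinal.{u} :=
  ⨆ z : Z, (ℵ₀ + sInf {c | ∃ γ : Set (Set Z), (∀ U ∈ γ, IsOpen U) ∧ ⋂₀ γ = {z} ∧ #γ = c})

/-- Weak covering number: `ℵ₀ +` the least cardinality of a family of open sets whose union
is dense. -/
noncomputable def weakCov (X : Type u) [TopologicalSpace X] : Cardinal.{u} :=
  ℵ₀ + sInf {c | ∃ J : Set (Set X), (∀ U ∈ J, IsOpen U) ∧ closure (⋃₀ J) = Set.univ ∧ #J = c}

/-- Cardinal logarithm: the least `μ` with `κ ≤ 2 ^ μ`. -/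
noncomputable def cardLog (κ : Cardinal.{u}) : Cardinal.{u} :=
  sInf {μ | κ ≤ 2 ^ μ}

/-- i-weight: `ℵ₀ +` the least weight of a space onto which `Z` admits a continuous
bijection. -/
noncomputable def iWeight (Z : Type u) [TopologicalSpace Z] : Cardinal.{u} :=
  ℵ₀ + sInf {c | ∃ (W : Type u) (_ : TopologicalSpace W) (f : Z → W),
      Continuous f ∧ Function.Bijective f ∧ weight W = c}

/-- For a regular space `X`, any space `Y`, `x ∈ X`, a nonempty closed
`E ⊆ X` with `x ∉ E`, and `y₁ y₂ ∈ Y`, there is a quasi-continuous `f : X → Y` with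
`f x = y₁` and `f '' E = {y₂}`. -/
theorem stmt15 (X : Type u) (Y : Type v) [TopologicalSpace X] [RegularSpace X]
    [TopologicalSpace Y] (x : X) (E : Set X) (hE : IsClosed E) (hne : E.Nonempty)
    (hx : x ∉ E) (y₁ y₂ : Y) :
    ∃ f : X → Y, QuasiContinuous f ∧ f x = y₁ ∧ f '' E = {y₂} := by
  classical
  -- choose a closed neighborhood of `x` inside `Eᶜ`
  have hEc : Eᶜ ∈ nhds x := hE.isOpen_compl.mem_nhds hx
  obtain ⟨s, hs_mem, hs_closed, hs_sub⟩ := exists_mem_nhds_isClosed_subset hEc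
  set A : Set X := interior s with hA
  have hAopen : IsOpen A := isOpen_interior
  have hxA : x ∈ A := mem_interior_iff_mem_nhds.2 hs_mem
  have hclA : closure A ⊆ Eᶜ := by
    calc closure A ⊆ closure s := closure_mono interior_subset
    _ = s := hs_closed.closure_eq
    _ ⊆ Eᶜ := hs_sub
  set f : X → Y := fun z => if z ∈ closure A then y₁ else y₂ with hf
  have hfA : ∀ z ∈ closure A, f z = y₁ := fun z hz => if_pos hz
  have hfnA : ∀ z ∉ closure A, f z = y₂ := fun z hz => if_neg hz
  refine ⟨f, ?_, hfA x (subset_closure hxA), ?_⟩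
  · intro z U hU hzU V hV hzV
    by_cases hz : z ∈ closure A
    · -- U meets A; use G = U ∩ A
      have hmeet : (U ∩ A).Nonempty := by
        rcases mem_closure_iff.1 hz U hU hzU with ⟨w, hwU, hwA⟩
        exact ⟨w, hwU, hwA⟩
      refine ⟨U ∩ A, hU.inter hAopen, hmeet, Set.inter_subset_left, ?_⟩
      rintro y ⟨w, hw, rfl⟩
      rw [hfA w (subset_closure hw.2)]
      rwa [hfA z hz] at hzV
    · -- use G = U ∩ (closure A)ᶜ
      refine ⟨U ∩ (closure A)ᶜ, hU.inter isClosed_closure.isOpen_compl,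
        ⟨z, hzU, hz⟩, Set.inter_subset_left, ?_⟩
      rintro y ⟨w, hw, rfl⟩
      rw [hfnA w hw.2]
      rwa [hfnA z hz] at hzV
  · apply Set.eq_singleton_iff_nonempty_unique_mem.2
    refine ⟨hne.image f, ?_⟩
    rintro y ⟨w, hwE, rfl⟩
    exact hfnA w (fun h => hclA h hwE)
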